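/- arXiv:1502.03607 — 2 statements merged into one kernel-verified Lean document; each statement's English description precedes it below -/
import Mathlib

section
/- Let (A, (·,·), R) be an extended affine root supersystem over a field F of characteristic zero. Then the set of Cartan integers {2(α,β)/(α,α) : α ∈ R_re \ {0}, β ∈ R} is a bounded subset of ℤ, i.e., there exists N ∈ ℕ such that for all α ∈ R_re \ {0} and β ∈ R the integer k with 2(α,β)/(α,α) = k·1_F satisfies |k| ≤ N. Moreover, for every α ∈ R_re \ {0} and every β ∈ R_ns one has 2(α,β)/(α,α) ∈ {0, ±1, ±2}. -/
open Pointwise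

/-- A symmetric biadditive form with values in `F`. -/
structure IsSymForm {F : Type*} [Field F] {A : Type*} [AddCommGroup A]
    (form : A → A → F) : Prop where
  symm : ∀ a b, form a b = form b a
  add_left : ∀ a b c, form (a + b) c = form a c + form b c

/-- The radical `A⁰` of a form. -/
def formRadical {F : Type*} [Field F] {A : Type*} [AddCommGroup A]
    (form : A → A → F) : Set A := {a | ∀ b, form a b = 0}

/-- The set of real roots `R_re = {α ∈ R | (α,α) ≠ 0} ∪ {0}`. -/
def reRoots {F : Type*} [Field F] {A : Type*} [AddCommGroup A]
    (form : A → A → F) (R : Set A) : Set A :=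
  {α | α ∈ R ∧ form α α ≠ 0} ∪ {0}

/-- The set of nonsingular roots `R_ns = {α ∈ R \ A⁰ | (α,α) = 0} ∪ {0}`. -/
def nsRoots {F : Type*} [Field F] {A : Type*} [AddCommGroup A]
    (form : A → A → F) (R : Set A) : Set A :=
  {α | α ∈ R ∧ form α α = 0 ∧ α ∉ formRadical form} ∪ {0}

/-- Extended affine root supersystem. -/
structure IsEARS {F : Type*} [Field F] [CharZero F] {A : Type*} [AddCommGroup A]
    (form : A → A → F) (R : Set A) extends IsSymForm form : Prop where
  zero_mem : (0 : A) ∈ R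
  closure_eq_top : AddSubgroup.closure R = ⊤
  neg_mem : ∀ α ∈ R, -α ∈ R
  cartan : ∀ α ∈ R, form α α ≠ 0 → ∀ β ∈ R, ∃ k : ℤ, 2 * form α β = (k : F) * form α α
  string : ∀ α ∈ R, form α α ≠ 0 → ∀ β ∈ R, ∃ p q : ℕ,
      2 * form β α = ((p : F) - (q : F)) * form α α ∧
      (∀ k : ℤ, β + k • α ∈ R ↔ -(p : ℤ) ≤ k ∧ k ≤ (q : ℤ))
  ns_string : ∀ α ∈ R, form α α = 0 → ∀ β ∈ R, form α β ≠ 0 →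
      (β - α ∈ R ∨ β + α ∈ R)

/-- Locally finite root supersystem: an EARS with nondegenerate form. -/
def IsLFRSS {F : Type*} [Field F] [CharZero F] {A : Type*} [AddCommGroup A]
    (form : A → A → F) (R : Set A) : Prop :=
  IsEARS form R ∧ ∀ a : A, (∀ b, form a b = 0) → a = 0

/-- `α` and `β` are connected in `X` by a finite chain with consecutive
elements non-orthogonal. -/
def ConnectedIn {F : Type*} [Field F] {A : Type*} [AddCommGroup A]
    (form : A → A → F) (X : Set A) (α β : A) : Prop :=
  ∃ (n : ℕ) (c : Fin (n + 1) → A), (∀ i, c i ∈ X) ∧ c 0 = α ∧ c (Fin.last n) = β ∧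
    ∀ i : Fin n, form (c i.castSucc) (c i.succ) ≠ 0

/-- A connected subset. -/
def IsConnectedSet {F : Type*} [Field F] {A : Type*} [AddCommGroup A]
    (form : A → A → F) (X : Set A) : Prop :=
  ∀ α ∈ X, ∀ β ∈ X, ConnectedIn form X α β

/-- Irreducibility: `R_re ≠ {0}` and `R \ R⁰` is connected. -/
def IsIrreducibleRSS {F : Type*} [Field F] {A : Type*} [AddCommGroup A]
    (form : A → A → F) (R : Set A) : Prop :=
  reRoots form R ≠ {0} ∧ IsConnectedSet form (R \ formRadical form)

/-- Sub-supersystem of a locally finite root supersystem. -/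
def IsSubSupersystem {F : Type*} [Field F] {A : Type*} [AddCommGroup A]
    (form : A → A → F) (R S : Set A) : Prop :=
  S ⊆ R ∧
  (∀ a ∈ AddSubgroup.closure S, (∀ b ∈ AddSubgroup.closure S, form a b = 0) → a = 0) ∧
  (0 : A) ∈ S ∧
  (∀ α ∈ S, form α α ≠ 0 → ∀ β ∈ S, ∀ k : ℤ,
      2 * form β α = (k : F) * form α α → β - k • α ∈ S) ∧
  (∀ γ ∈ S, form γ γ = 0 → ∀ β ∈ S, form β γ ≠ 0 → (γ - β ∈ S ∨ γ + β ∈ S))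

/-- `Π` is an integral base of `R` (a `ℤ`-basis of the group generated by `R`). -/
def IsIntegralBase {F : Type*} [Field F] {A : Type*} [AddCommGroup A]
    (form : A → A → F) (R P : Set A) : Prop :=
  P ⊆ R ∧ LinearIndependent ℤ (fun p : P => (p : A)) ∧
    Submodule.span ℤ P = Submodule.span ℤ R

/-- `Π` is a base of `R`. -/
def IsBase {F : Type*} [Field F] {A : Type*} [AddCommGroup A]
    (form : A → A → F) (R P : Set A) : Prop :=
  IsIntegralBase form R P ∧
  ∀ α ∈ R \ formRadical form, ∃ (n : ℕ) (a : Fin n → A) (r : Fin n → ℤ),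
    (∀ i, a i ∈ P) ∧ (∀ i, r i = 1 ∨ r i = -1) ∧
    α = ∑ i, r i • a i ∧
    ∀ t : Fin n, (∑ i ∈ Finset.Iic t, r i • a i) ∈ R \ formRadical form

section EARS9aux

variable {F : Type*} [Field F] {A : Type*} [AddCommGroup A] {form : A → A → F}

lemma IsSymForm.add_right (hs : IsSymForm form) (a b c : A) :
    form a (b + c) = form a b + form a c := by
  rw [hs.symm, hs.add_left, hs.symm b a, hs.symm c a]

lemma IsSymForm.zsmul_left (hs : IsSymForm form) (n : ℤ) (a b : A) :
    form (n • a) b = (n : F) * form a b := by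
  have := (AddMonoidHom.mk' (fun x => form x b) (fun x y => hs.add_left x y b)).map_zsmul n a
  simpa [zsmul_eq_mul] using this

lemma IsSymForm.zsmul_right (hs : IsSymForm form) (n : ℤ) (a b : A) :
    form a (n • b) = (n : F) * form a b := by
  rw [hs.symm, hs.zsmul_left, hs.symm]

lemma IsSymForm.zero_right (hs : IsSymForm form) (a : A) : form a 0 = 0 := by
  have := hs.zsmul_right 0 a 0
  simpa using this

lemma IsSymForm.neg_left (hs : IsSymForm form) (a b : A) : form (-a) b = -form a b := by
  have := hs.zsmul_left (-1) a b
  simpa using this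

lemma IsSymForm.neg_right (hs : IsSymForm form) (a b : A) : form a (-b) = -form a b := by
  rw [hs.symm, hs.neg_left, hs.symm]

lemma IsSymForm.expand (hs : IsSymForm form) (n : ℤ) (a b : A) :
    form (b + n • a) (b + n • a)
      = form b b + ((2*n : ℤ) : F) * form a b + ((n^2 : ℤ) : F) * form a a := by
  rw [hs.add_left, hs.add_right, hs.add_right, hs.zsmul_left, hs.zsmul_left,
    hs.zsmul_right, hs.zsmul_right, hs.symm b a]
  push_cast; ring

lemma IsSymForm.addsmul_left (hs : IsSymForm form) (n : ℤ) (a b : A) :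
    form (b + n • a) a = form b a + (n : F) * form a a := by
  rw [hs.add_left, hs.zsmul_left]

lemma dvd_abs_lt_false9 {a b : ℤ} (h : a ∣ b) (hb : b ≠ 0) (hab : |b| < |a|) : False := by
  have h1 : |a| ≤ |b| := Int.le_of_dvd (abs_pos.mpr hb) ((abs_dvd _ _).mpr ((dvd_abs _ _).mpr h))
  omega

lemma intArith9 (k m t1 t2 t3 : ℤ) (h7 : 7 ≤ k) (hm : m ≠ 0)
    (e1 : m*(k-2*1) = t1*(k + 1*m*(1-k)))
    (e2 : m*(k-2*2) = t2*(k + 2*m*(2-k)))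
    (e3 : m*(k-2*3) = t3*(k + 3*m*(3-k))) : False := by
  have hmcase : m = 1 ∨ m = 2 ∨ m = k := by
    by_contra hno
    push_neg at hno
    obtain ⟨hm1, hm2, hmk⟩ := hno
    have hdvd : (k + 1*m*(1-k)) ∣ (k - m) := ⟨1 + t1, by linear_combination e1⟩
    apply dvd_abs_lt_false9 hdvd (by omega : k - m ≠ 0)
    rcases le_or_gt m 0 with hle | hpos
    · have hmneg : m ≤ -1 := by omega
      have hc1pos : 0 < k + 1*m*(1-k) := by
        nlinarith [mul_pos (show (0:ℤ) < -m by omega) (show (0:ℤ) < k - 1 by omega)]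
      rw [abs_of_pos hc1pos, abs_of_pos (by omega : (0:ℤ) < k - m)]
      nlinarith [mul_pos (show (0:ℤ) < -m by omega) (show (0:ℤ) < k - 2 by omega)]
    · have hm3 : 3 ≤ m := by omega
      have hc1neg : k + 1*m*(1-k) < 0 := by
        nlinarith [mul_le_mul_of_nonneg_right hm3 (show (0:ℤ) ≤ k - 1 by omega)]
      rw [abs_of_neg hc1neg]
      rcases lt_or_ge m k with h' | h'
      · rw [abs_of_pos (by omega : (0:ℤ) < k - m)]
        nlinarith [mul_le_mul_of_nonneg_right hm3 (show (0:ℤ) ≤ k by omega)]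
      · have hmk' : k < m := by omega
        rw [abs_of_neg (by omega : k - m < 0)]
        nlinarith [mul_pos (show (0:ℤ) < m by omega) (show (0:ℤ) < k - 2 by omega)]
  rcases hmcase with rfl | rfl | hmk
  · exact dvd_abs_lt_false9 (show (k + 3*1*(3-k)) ∣ (1*(k-2*3)) from ⟨t3, by linear_combination e3⟩)
      (by omega)
      (by rw [abs_of_pos (by omega : (0:ℤ) < 1*(k-2*3)), abs_of_neg (by omega : k + 3*1*(3-k) < 0)]; omega)
  · exact dvd_abs_lt_false9 (show (k + 2*2*(2-k)) ∣ (2*(k-2*2)) from ⟨t2, by linear_combination e2⟩)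
      (by omega)
      (by rw [abs_of_pos (by omega : (0:ℤ) < 2*(k-2*2)), abs_of_neg (by omega : k + 2*2*(2-k) < 0)]; omega)
  · subst hmk
    have hkne : (m:ℤ) ≠ 0 := by omega
    have hkey : m - 4 = t2*(5 - 2*m) := by
      have h' : m*(m-4) = m*(t2*(5-2*m)) := by linear_combination e2
      exact mul_left_cancel₀ hkne h'
    exact dvd_abs_lt_false9 (show (5 - 2*m) ∣ (m - 4) from ⟨t2, by linear_combination hkey⟩)
      (by omega)
      (by rw [abs_of_pos (by omega : (0:ℤ) < m - 4), abs_of_neg (by omega : 5 - 2*m < 0)]; omega)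

end EARS9aux

section EARS9main

variable {F : Type*} [Field F] [CharZero F] {A : Type*} [AddCommGroup A]
variable {form : A → A → F} {R : Set A}

lemma lemA_aux9 (h : IsEARS form R) {α β : A} (hα : α ∈ R) (hαα : form α α ≠ 0)
    (hβ : β ∈ R) (hββ : form β β = 0) {k : ℤ} (hk : 2 * form α β = (k:F) * form α α)
    (h3 : 3 ≤ k) : False := by
  have hs := h.toIsSymForm
  obtain ⟨p, q, hpq, hstr⟩ := h.string α hα hαα β hβ
  have hβα : 2 * form β α = (k:F) * form α α := by rw [hs.symm β α]; exact hk
  have hpqk : (p:ℤ) - q = k := by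
    have h' : ((p:F) - q) = (k:F) :=
      mul_right_cancel₀ hαα (by rw [← hpq]; exact hβα)
    exact_mod_cast h'
  have hγ : β + (-1:ℤ) • α ∈ R := (hstr (-1)).mpr ⟨by omega, by omega⟩
  have hγγ : form (β + (-1:ℤ) • α) (β + (-1:ℤ) • α) = ((1 - k : ℤ):F) * form α α := by
    have hexp := hs.expand (-1) α β
    rw [hββ] at hexp
    push_cast at hexp ⊢
    linear_combination hexp - hk
  have hγγne : form (β + (-1:ℤ) • α) (β + (-1:ℤ) • α) ≠ 0 := by
    rw [hγγ]
    exact mul_ne_zero (Int.cast_ne_zero.mpr (by omega)) hαα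
  obtain ⟨t, ht⟩ := h.cartan _ hγ hγγne α hα
  have hγα := hs.addsmul_left (-1) α β
  have key : ((k - 2 : ℤ):F) * form α α = ((t*(1-k) : ℤ):F) * form α α := by
    push_cast at hγγ hγα ht ⊢
    linear_combination ht - 2*hγα - hβα + (t:F)*hγγ
  have keyZ : (k - 2 : ℤ) = t*(1-k) := by
    have := mul_right_cancel₀ hαα key
    exact_mod_cast this
  exact dvd_abs_lt_false9 (show (1-k) ∣ (k-2) from ⟨t, by linear_combination keyZ⟩)
    (by omega)
    (by rw [abs_of_pos (by omega : (0:ℤ) < k - 2), abs_of_neg (by omega : 1 - k < 0)]; omega)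

lemma lemA9 (h : IsEARS form R) {α β : A} (hα : α ∈ R) (hαα : form α α ≠ 0)
    (hβ : β ∈ R) (hββ : form β β = 0) {k : ℤ} (hk : 2 * form α β = (k:F) * form α α) :
    k.natAbs ≤ 2 := by
  have hs := h.toIsSymForm
  by_contra hc
  have h3 : 3 ≤ k ∨ k ≤ -3 := by omega
  rcases h3 with h3 | h3
  · exact lemA_aux9 h hα hαα hβ hββ hk h3
  · have hβ' : -β ∈ R := h.neg_mem β hβ
    have hββ' : form (-β) (-β) = 0 := by rw [hs.neg_left, hs.neg_right, hββ]; ring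
    have hk' : 2 * form α (-β) = ((-k : ℤ):F) * form α α := by
      rw [hs.neg_right]; push_cast; linear_combination -hk
    exact lemA_aux9 h hα hαα hβ' hββ' hk' (by omega)

lemma lemB_aux9 (h : IsEARS form R) {α β : A} (hα : α ∈ R) (hαα : form α α ≠ 0)
    (hβ : β ∈ R) (hββ : form β β ≠ 0) {k : ℤ} (hk : 2 * form α β = (k:F) * form α α)
    (h7 : 7 ≤ k) : False := by
  have hs := h.toIsSymForm
  obtain ⟨m, hm⟩ := h.cartan β hβ hββ α hα
  have hmne : m ≠ 0 := by
    intro h0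
    rw [h0] at hm
    have hβα0 : form β α = 0 := by
      push_cast at hm; linear_combination hm/2
    have : (k:F) * form α α = 0 := by
      rw [← hk, hs.symm α β, hβα0]; ring
    have hk0 : (k:F) = 0 := by
      rcases mul_eq_zero.mp this with h' | h'
      · exact h'
      · exact absurd h' hαα
    have : k = 0 := by exact_mod_cast hk0
    omega
  have hkm : (k:F) * form α α = (m:F) * form β β := by
    rw [← hk, hs.symm α β]; exact hm
  obtain ⟨p, q, hpq, hstr⟩ := h.string α hα hαα β hβ
  have hpqk : (p:ℤ) - q = k := by
    have h' : ((p:F) - q) = (k:F) := by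
      apply mul_right_cancel₀ hαα
      rw [← hpq, hs.symm β α]; exact hk
    exact_mod_cast h'
  have sub : ∀ j : ℤ, 1 ≤ j → j ≤ 3 →
      ∃ t : ℤ, m*(k - 2*j) = t*(k + j*m*(j-k)) := by
    intro j hj1 hj3
    have hγ : β + (-j) • α ∈ R := (hstr (-j)).mpr ⟨by omega, by omega⟩
    have hexp := hs.expand (-j) α β
    have hmγγ : (m:F) * form (β + (-j) • α) (β + (-j) • α)
        = ((k + j*m*(j-k) : ℤ):F) * form α α := by
      push_cast at hexp ⊢
      linear_combination (m:F)*hexp - hkm - ((j:F)*(m:F))*hk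
    have hcne : (k + j*m*(j-k)) ≠ 0 := by
      intro h0
      have hj' : j = 1 ∨ j = 2 ∨ j = 3 := by omega
      rcases hj' with rfl | rfl | rfl
      · rcases lt_trichotomy m 1 with h' | h' | h'
        · nlinarith [mul_pos (show (0:ℤ) < -m by omega) (show (0:ℤ) < k - 1 by omega)]
        · subst h'; linarith [h0]
        · nlinarith [mul_le_mul_of_nonneg_right (show (2:ℤ) ≤ m by omega)
            (show (0:ℤ) ≤ k - 1 by omega)]
      · rcases le_or_gt m 0 with h' | h'
        · nlinarith [mul_nonneg (show (0:ℤ) ≤ -m by omega) (show (0:ℤ) ≤ k - 2 by omega)]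
        · nlinarith [mul_le_mul_of_nonneg_right (show (1:ℤ) ≤ m by omega)
            (show (0:ℤ) ≤ k - 2 by omega)]
      · rcases le_or_gt m 0 with h' | h'
        · nlinarith [mul_nonneg (show (0:ℤ) ≤ -m by omega) (show (0:ℤ) ≤ k - 3 by omega)]
        · nlinarith [mul_le_mul_of_nonneg_right (show (1:ℤ) ≤ m by omega)
            (show (0:ℤ) ≤ k - 3 by omega)]
    have hγγne : form (β + (-j) • α) (β + (-j) • α) ≠ 0 := by
      intro h0
      rw [h0, mul_zero] at hmγγ
      exact mul_ne_zero (Int.cast_ne_zero.mpr hcne) hαα hmγγ.symm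
    obtain ⟨t, ht⟩ := h.cartan _ hγ hγγne α hα
    refine ⟨t, ?_⟩
    have hγα := hs.addsmul_left (-j) α β
    have hβα2 : 2 * form β α = (k:F) * form α α := by rw [hs.symm β α]; exact hk
    have key : ((m*(k - 2*j) : ℤ):F) * form α α = ((t*(k + j*m*(j-k)) : ℤ):F) * form α α := by
      push_cast at hγα hmγγ ht ⊢
      linear_combination (m:F)*ht + (t:F)*hmγγ - 2*(m:F)*hγα - (m:F)*hβα2
    have := mul_right_cancel₀ hαα key
    exact_mod_cast this
  obtain ⟨t1, e1⟩ := sub 1 (by norm_num) (by norm_num)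
  obtain ⟨t2, e2⟩ := sub 2 (by norm_num) (by norm_num)
  obtain ⟨t3, e3⟩ := sub 3 (by norm_num) (by norm_num)
  exact intArith9 k m t1 t2 t3 h7 hmne (by linear_combination e1) (by linear_combination e2)
    (by linear_combination e3)

lemma lemB9 (h : IsEARS form R) {α β : A} (hα : α ∈ R) (hαα : form α α ≠ 0)
    (hβ : β ∈ R) (hββ : form β β ≠ 0) {k : ℤ} (hk : 2 * form α β = (k:F) * form α α) :
    k.natAbs ≤ 6 := by
  have hs := h.toIsSymForm
  by_contra hc
  have h7 : 7 ≤ k ∨ k ≤ -7 := by omega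
  rcases h7 with h7 | h7
  · exact lemB_aux9 h hα hαα hβ hββ hk h7
  · have hβ' : -β ∈ R := h.neg_mem β hβ
    have hββ' : form (-β) (-β) ≠ 0 := by
      rw [hs.neg_left, hs.neg_right, neg_neg]; exact hββ
    have hk' : 2 * form α (-β) = ((-k : ℤ):F) * form α α := by
      rw [hs.neg_right]; push_cast; linear_combination -hk
    exact lemB_aux9 h hα hαα hβ' hββ' hk' (by omega)

end EARS9main


theorem stmt9 {F : Type*} [Field F] [CharZero F] {A : Type*} [AddCommGroup A]
    (form : A → A → F) (R : Set A) (h : IsEARS form R) :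
    (∃ N : ℕ, ∀ α ∈ R, form α α ≠ 0 → ∀ β ∈ R, ∀ k : ℤ,
        2 * form α β = (k : F) * form α α → k.natAbs ≤ N) ∧
    (∀ α ∈ reRoots form R, α ≠ 0 → ∀ β ∈ nsRoots form R, ∀ k : ℤ,
        2 * form α β = (k : F) * form α α →
        (k = 0 ∨ k = 1 ∨ k = -1 ∨ k = 2 ∨ k = -2)) := by
  constructor
  · refine ⟨6, fun α hα hαα β hβ k hk => ?_⟩
    by_cases h0 : form β β = 0
    · exact le_trans (lemA9 h hα hαα hβ h0 hk) (by norm_num)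
    · exact lemB9 h hα hαα hβ h0 hk
  · intro α hαmem hα0 β hβmem k hk
    have hs := h.toIsSymForm
    simp only [reRoots, Set.mem_union, Set.mem_setOf_eq, Set.mem_singleton_iff] at hαmem
    simp only [nsRoots, Set.mem_union, Set.mem_setOf_eq, Set.mem_singleton_iff] at hβmem
    rcases hαmem with ⟨hαR, hαα⟩ | rfl
    · rcases hβmem with ⟨hβR, hββ, -⟩ | rfl
      · have := lemA9 h hαR hαα hβR hββ hk
        omega
      · rw [hs.zero_right] at hk
        have hkF : (k:F) * form α α = 0 := by linear_combination -hk
        have hk0 : (k:F) = 0 := by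
          rcases mul_eq_zero.mp hkF with h' | h'
          · exact h'
          · exact absurd h' hαα
        left
        exact_mod_cast hk0
    · exact absurd rfl hα0
end

section
/- Let (A, (·,·), R) be an extended affine root supersystem over a field F of characteristic zero. Let ¯ : A → Ā := A/A⁰ be the canonical epimorphism and let (·,·)^¯ be the induced form on Ā defined by (ā, b̄) := (a, b) for a, b ∈ A (this is well defined). Then (Ā, (·,·)^¯, R̄) is a locally finite root supersystem, where R̄ denotes the image of R in Ā. Moreover, if R is irreducible then R̄ is irreducible. -/
open Pointwise

/-- The radical as an additive subgroup (for a symmetric biadditive form). -/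
def radicalSubgroup {F : Type*} [Field F] {A : Type*} [AddCommGroup A]
    (form : A → A → F) (hs : IsSymForm form) : AddSubgroup A where
  carrier := formRadical form
  zero_mem' := by
    intro b
    have h := hs.add_left 0 0 b
    rw [add_zero] at h
    linear_combination -h
  add_mem' := by
    intro a b ha hb c
    rw [hs.add_left, ha c, hb c, add_zero]
  neg_mem' := by
    intro a ha c
    have h0 : form 0 c = 0 := by
      have h := hs.add_left 0 0 c
      rw [add_zero] at h
      linear_combination -h
    have h := hs.add_left a (-a) c
    rw [add_neg_cancel, h0, ha c, zero_add] at h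
    exact h.symm

section Stmt12Aux

variable {F : Type*} [Field F] {A : Type*} [AddCommGroup A] {form : A → A → F}
  (hs : IsSymForm form)

include hs

/-- `form · b` as an additive hom. -/
def formHom (b : A) : A →+ F :=
  AddMonoidHom.mk' (fun a => form a b) (fun x y => hs.add_left x y b)

lemma form_zero_left (b : A) : form 0 b = 0 := (formHom hs b).map_zero

lemma form_zsmul_left (k : ℤ) (a b : A) : form (k • a) b = (k : F) * form a b := by
  have := map_zsmul (formHom hs b) k a
  simpa [formHom, zsmul_eq_mul] using this

lemma form_sub_left (x y b : A) : form (x - y) b = form x b - form y b :=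
  map_sub (formHom hs b) x y

lemma form_add_right (a b c : A) : form a (b + c) = form a b + form a c := by
  rw [hs.symm, hs.add_left, hs.symm b a, hs.symm c a]

lemma form_zsmul_right (k : ℤ) (a b : A) : form a (k • b) = (k : F) * form a b := by
  rw [hs.symm, form_zsmul_left hs, hs.symm]

lemma form_left_congr {x y : A} (hxy : x - y ∈ formRadical form) (d : A) :
    form x d = form y d := by
  have h1 := form_sub_left hs x y d
  rw [hxy d] at h1
  exact (sub_eq_zero.mp h1.symm)

lemma form_congr₂ {x y x' y' : A} (hxy : x - y ∈ formRadical form)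
    (hxy' : x' - y' ∈ formRadical form) : form x x' = form y y' := by
  rw [form_left_congr hs hxy, hs.symm, form_left_congr hs hxy', hs.symm]

lemma form_expand_right (β α : A) (k : ℤ) :
    form (β + k • α) α = form β α + (k : F) * form α α := by
  rw [hs.add_left, form_zsmul_left hs]

lemma form_expand₂ (β α : A) (k : ℤ) :
    form (β + k • α) (β + k • α)
      = form β β + (2 * k : ℤ) * form β α + ((k : F))^2 * form α α := by
  simp only [hs.add_left, form_add_right hs, form_zsmul_left hs, form_zsmul_right hs,
    hs.symm α β]
  push_cast
  ring

end Stmt12Aux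


lemma qboundAux (u cq r : ℚ) (hw : |u^2 + cq*u + r| ≤ |2*u + cq|) :
    |u| ≤ 2*(|cq| + |r| + 2) + 1 := by
  set B := |cq| + |r| + 2 with hB
  have hB2 : 2 ≤ B := by
    have := abs_nonneg cq; have := abs_nonneg r; linarith
  have hcu : |cq*u + r| ≤ |cq| * |u| + |r| := by
    calc |cq*u + r| ≤ |cq*u| + |r| := abs_add_le _ _
    _ = |cq| * |u| + |r| := by rw [abs_mul]
  have h2 : |2*u + cq| ≤ 2*|u| + |cq| := by
    calc |2*u + cq| ≤ |2*u| + |cq| := abs_add_le _ _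
    _ = 2*|u| + |cq| := by rw [abs_mul]; norm_num
  have h3 : u^2 ≤ |u^2 + cq*u + r| + |cq*u + r| := by
    have t := abs_add_le (u^2 + cq*u + r) (-(cq*u) - r)
    rw [show u^2 + cq*u + r + (-(cq*u) - r) = u^2 by ring] at t
    rw [show |-(cq*u) - r| = |cq*u + r| by rw [show -(cq*u) - r = -(cq*u + r) by ring, abs_neg]] at t
    calc u^2 = |u^2| := (abs_of_nonneg (sq_nonneg u)).symm
    _ ≤ _ := t
  have h4 : u^2 ≤ B*|u| + B := by
    have : u^2 ≤ 2*|u| + |cq| + (|cq| * |u| + |r|) := by linarith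
    have hu0 := abs_nonneg u
    nlinarith [abs_nonneg cq, abs_nonneg r]
  nlinarith [sq_abs u, abs_nonneg u, h4, hB2]

section StringQuot

variable {F : Type*} [Field F] [CharZero F] {A : Type*} [AddCommGroup A]
  {form : A → A → F} {R : Set A}

lemma string_quot (h : IsEARS form R) {α β : A} (hα : α ∈ R) (ha : form α α ≠ 0)
    (hβ : β ∈ R) :
    ∃ p q : ℕ, 2 * form β α = ((p : F) - (q : F)) * form α α ∧
      ∀ k : ℤ, (∃ γ ∈ R, γ - (β + k • α) ∈ formRadical form) ↔
        (-(p : ℤ) ≤ k ∧ k ≤ (q : ℤ)) := by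
  classical
  have hs := h.toIsSymForm
  obtain ⟨p₀, q₀, hc₀, hstr₀⟩ := h.string α hα ha β hβ
  set a := form α α with hadef
  set c : ℤ := (p₀ : ℤ) - q₀ with hcdef
  have hcF : ((c : ℤ) : F) = (p₀ : F) - (q₀ : F) := by rw [hcdef]; push_cast; ring
  set Sp : ℤ → Prop := fun k => ∃ γ ∈ R, γ - (β + k • α) ∈ formRadical form with hSpdef
  have hSp0 : Sp 0 := by
    refine ⟨β, hβ, ?_⟩
    have h0 : β - (β + (0:ℤ) • α) = 0 := by simp
    rw [h0]
    exact fun b => form_zero_left hs b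
  -- data from witnesses
  have witα : ∀ k : ℤ, ∀ γ : A, γ - (β + k • α) ∈ formRadical form →
      form γ α = form β α + (k : F) * a :=
    fun k γ hrad => (form_left_congr hs hrad α).trans (form_expand_right hs β α k)
  have witγ : ∀ k : ℤ, ∀ γ : A, γ - (β + k • α) ∈ formRadical form →
      form γ γ = form β β + ((k*c + k^2 : ℤ) : F) * a := by
    intro k γ hrad
    rw [form_congr₂ hs hrad hrad, form_expand₂ hs]
    rw [hcdef]
    push_cast
    linear_combination (k : F) * hc₀
  have stringData : ∀ k : ℤ, Sp k → ∃ P Q : ℕ, ((P:ℤ) - Q = c + 2*k) ∧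
      ∀ j : ℤ, -(P:ℤ) ≤ j → j ≤ (Q:ℤ) → Sp (k + j) := by
    rintro k ⟨γ, hγ, hrad⟩
    obtain ⟨P, Q, hPQ, hstrγ⟩ := h.string α hα ha γ hγ
    refine ⟨P, Q, ?_, ?_⟩
    · have e : ((P:F) - Q) * a = (((p₀:F) - q₀) + 2*(k:F)) * a := by
        rw [← hPQ, witα k γ hrad]
        linear_combination hc₀
      have e2 := mul_right_cancel₀ ha e
      have e3 : (P:ℤ) - Q = ((p₀:ℤ) - q₀) + 2*k := by exact_mod_cast e2
      omega
    · intro j hj1 hj2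
      refine ⟨γ + j • α, (hstrγ j).mpr ⟨hj1, hj2⟩, ?_⟩
      have e : γ + j • α - (β + (k + j) • α) = γ - (β + k • α) := by
        rw [add_zsmul]; abel
      rw [e]; exact hrad
  have keyF : ∀ k : ℤ, Sp k →
      (form β β + ((k*c + k^2 : ℤ) : F) * a = 0) ∨ (2*k + c = 0) ∨
      ∃ m : ℤ, m ≠ 0 ∧ (m:F) * (form β β + ((k*c + k^2 : ℤ) : F) * a)
        = ((c + 2*k : ℤ) : F) * a := by
    rintro k ⟨γ, hγ, hrad⟩
    have hγγ := witγ k γ hrad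
    have e3 : 2 * form γ α = ((c + 2*k : ℤ) : F) * a := by
      rw [witα k γ hrad, hcdef]
      push_cast
      linear_combination hc₀
    by_cases hz : form γ γ = 0
    · exact Or.inl (by rw [← hγγ]; exact hz)
    · obtain ⟨m, hm⟩ := h.cartan γ hγ hz α hα
      by_cases hm0 : m = 0
      · refine Or.inr (Or.inl ?_)
        rw [hm0] at hm
        norm_num at hm
        have h2' : ((c + 2*k : ℤ) : F) * a = 0 := by rw [← e3, hm]; ring
        have h2 : ((c + 2*k : ℤ) : F) = 0 :=
          (mul_eq_zero.mp h2').resolve_right ha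
        have h3 : c + 2*k = 0 := by exact_mod_cast h2
        omega
      · exact Or.inr (Or.inr ⟨m, hm0, by rw [← hγγ, ← hm, e3]⟩)
  -- boundedness
  have hbdd : ∃ N : ℤ, ∀ k : ℤ, Sp k → |k| ≤ N := by
    by_cases hex : ∃ r : ℚ, form β β = (r : F) * a
    · obtain ⟨r, hr⟩ := hex
      refine ⟨2*(|c| + ⌈|r|⌉ + 2) + 1, ?_⟩
      intro k hk
      have hwq : ∀ k : ℤ, ((((k:ℚ)^2 + (c:ℚ)*k + r : ℚ)) : F) * a
          = form β β + ((k*c + k^2 : ℤ) : F) * a := by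
        intro k; rw [hr]; push_cast; ring
      have habs : |(k:ℚ)| ≤ 2*(|(c:ℚ)| + |r| + 2) + 1 := by
        rcases keyF k hk with h1 | h2 | ⟨m, hm0, hm⟩
        · have e : (((k:ℚ)^2 + (c:ℚ)*k + r : ℚ) : F) * a = 0 := by rw [hwq]; exact h1
          have e2 : (((k:ℚ)^2 + (c:ℚ)*k + r : ℚ) : F) = 0 :=
            (mul_eq_zero.mp e).resolve_right ha
          have e3 : (k:ℚ)^2 + (c:ℚ)*k + r = 0 := by exact_mod_cast e2
          apply qboundAux
          rw [show (k:ℚ)^2 + (c:ℚ)*(k:ℚ) + r = 0 from e3]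
          simp [abs_nonneg]
        · have hu : 2*(k:ℚ) + (c:ℚ) = 0 := by exact_mod_cast congrArg (fun z : ℤ => (z:ℚ)) h2
          have : |(k:ℚ)| = |(c:ℚ)|/2 := by
            rw [show (k:ℚ) = -(c:ℚ)/2 by linarith]
            rw [abs_div, abs_neg]
            norm_num
          have := abs_nonneg r
          have := abs_nonneg (c:ℚ)
          linarith [this]
        · have e : (m:F) * ((((k:ℚ)^2 + (c:ℚ)*k + r : ℚ)) : F) * a
              = ((c + 2*k : ℤ) : F) * a := by rw [mul_assoc, hwq]; exact hm
          have e2 : (m:F) * (((k:ℚ)^2 + (c:ℚ)*k + r : ℚ) : F) = ((c + 2*k : ℤ) : F) :=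
            mul_right_cancel₀ ha e
          have e3 : (m:ℚ) * ((k:ℚ)^2 + (c:ℚ)*k + r) = 2*(k:ℚ) + (c:ℚ) := by
            have : ((((m:ℚ) * ((k:ℚ)^2 + (c:ℚ)*k + r)) : ℚ) : F)
                = (((2*(k:ℚ) + (c:ℚ) : ℚ)) : F) := by push_cast; push_cast at e2; linear_combination e2
            exact_mod_cast this
          have hm1 : (1:ℚ) ≤ |(m:ℚ)| := by
            have := Int.one_le_abs hm0
            exact_mod_cast this
          apply qboundAux
          have e4 : |(m:ℚ)| * |(k:ℚ)^2 + (c:ℚ)*k + r| = |2*(k:ℚ) + (c:ℚ)| := by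
            rw [← abs_mul, e3]
          nlinarith [abs_nonneg ((k:ℚ)^2 + (c:ℚ)*k + r)]
      have hNQ : (2*(|(c:ℚ)| + |r| + 2) + 1 : ℚ) ≤ ((2*(|c| + ⌈|r|⌉ + 2) + 1 : ℤ) : ℚ) := by
        push_cast [Int.cast_abs]
        have := Int.le_ceil |r|
        push_cast at this
        linarith
      have : |(k:ℚ)| ≤ ((2*(|c| + ⌈|r|⌉ + 2) + 1 : ℤ) : ℚ) := le_trans habs hNQ
      rw [← Int.cast_abs] at this
      exact_mod_cast this
    · refine ⟨|c|, ?_⟩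
      intro k hk
      have h2 : 2*k + c = 0 := by
        rcases keyF k hk with h1 | h2 | ⟨m, hm0, hm⟩
        · exfalso; apply hex
          refine ⟨((-(k*c + k^2) : ℤ) : ℚ), ?_⟩
          push_cast
          push_cast at h1
          linear_combination h1
        · exact h2
        · exfalso; apply hex
          have hmF : (m:F) ≠ 0 := Int.cast_ne_zero.mpr hm0
          refine ⟨(((c + 2*k : ℤ) : ℚ) - (m:ℚ)*((k*c + k^2 : ℤ) : ℚ))/(m:ℚ), ?_⟩
          have hmQ : (m:ℚ) ≠ 0 := Int.cast_ne_zero.mpr hm0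
          have hmF2 : ((m:ℤ):F) ≠ 0 := Int.cast_ne_zero.mpr hm0
          push_cast
          rw [div_mul_eq_mul_div, eq_div_iff hmF2]
          push_cast at hm
          linear_combination hm
      have : |c| = 2 * |k| := by
        rw [show c = (-2)*k by omega, abs_mul]
        norm_num
      have := abs_nonneg k
      omega
  obtain ⟨N, hN⟩ := hbdd
  obtain ⟨M, hMSp, hMmax⟩ := Int.exists_greatest_of_bdd
    ⟨N, fun z hz => (le_abs_self z).trans (hN z hz)⟩ ⟨0, hSp0⟩
  obtain ⟨mm, hmSp, hmmin⟩ := Int.exists_least_of_bdd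
    ⟨-N, fun z hz => by have h1 := hN z hz; have h2 := neg_abs_le z; omega⟩ ⟨0, hSp0⟩
  obtain ⟨P, Q, hPQ, hI⟩ := stringData M hMSp
  have hQnn : (0:ℤ) ≤ (Q:ℤ) := Int.natCast_nonneg Q
  have hPnn : (0:ℤ) ≤ (P:ℤ) := Int.natCast_nonneg P
  have hQ0 : (Q:ℤ) = 0 := by
    have h1 := hMmax (M + Q) (hI Q (by omega) le_rfl)
    omega
  have hP : (P:ℤ) = c + 2*M := by omega
  have interval : ∀ t : ℤ, -c - M ≤ t → t ≤ M → Sp t := by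
    intro t h1 h2
    have := hI (t - M) (by omega) (by omega)
    rw [show M + (t - M) = t by ring] at this
    exact this
  obtain ⟨P', Q', hPQ', hI'⟩ := stringData mm hmSp
  have hQnn' : (0:ℤ) ≤ (Q':ℤ) := Int.natCast_nonneg Q'
  have hPnn' : (0:ℤ) ≤ (P':ℤ) := Int.natCast_nonneg P'
  have hP'0 : (P':ℤ) = 0 := by
    have h1 := hmmin (mm + -(P':ℤ)) (hI' (-(P':ℤ)) le_rfl (by omega))
    omega
  have hQ' : (Q':ℤ) = -(c + 2*mm) := by omega
  have hSm : Sp (-c - M) := interval _ le_rfl (by omega)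
  have e1 : mm ≤ -c - M := hmmin _ hSm
  have hSm2 : Sp (-c - mm) := by
    have := hI' (Q':ℤ) (by omega) le_rfl
    rw [show mm + (Q':ℤ) = -c - mm by omega] at this
    exact this
  have e2 : -c - mm ≤ M := hMmax _ hSm2
  have hsum : mm + M = -c := by omega
  have hm0 : mm ≤ 0 := hmmin 0 hSp0
  have hM0 : 0 ≤ M := hMmax 0 hSp0
  refine ⟨(-mm).toNat, M.toNat, ?_, ?_⟩
  · have hp : (((-mm).toNat : ℤ)) = -mm := Int.toNat_of_nonneg (by omega)
    have hq : ((M.toNat : ℤ)) = M := Int.toNat_of_nonneg hM0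
    have h' : (((-mm).toNat : ℤ)) - (M.toNat : ℤ) = (p₀:ℤ) - q₀ := by omega
    have h'' : (((-mm).toNat : F)) - (M.toNat : F) = (p₀:F) - (q₀:F) := by
      exact_mod_cast congrArg (fun z : ℤ => (z:F)) h'
    rw [h'']
    exact hc₀
  · intro k
    have hp : (((-mm).toNat : ℤ)) = -mm := Int.toNat_of_nonneg (by omega)
    have hq : ((M.toNat : ℤ)) = M := Int.toNat_of_nonneg hM0
    constructor
    · intro hk
      have h1 := hmmin k hk
      have h2 := hMmax k hk
      omega
    · rintro ⟨hk1, hk2⟩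
      exact interval k (by omega) (by omega)

end StringQuot

section MainAux

variable {F : Type*} [Field F] [CharZero F] {A : Type*} [AddCommGroup A]

lemma stmt12_aux (form : A → A → F) (R : Set A) (h : IsEARS form R)
    (H : AddSubgroup A) (hH : ∀ x : A, x ∈ H ↔ x ∈ formRadical form)
    (form' : A ⧸ H → A ⧸ H → F)
    (hform' : ∀ a b : A, form' (QuotientAddGroup.mk a) (QuotientAddGroup.mk b) = form a b) :
    IsLFRSS form' ((QuotientAddGroup.mk : A → A ⧸ H) '' R) ∧
    (IsIrreducibleRSS form R →
      IsIrreducibleRSS form' ((QuotientAddGroup.mk : A → A ⧸ H) '' R)) := by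
  classical
  have hs := h.toIsSymForm
  set mk : A → A ⧸ H := QuotientAddGroup.mk with hmkdef
  have mksurj : Function.Surjective mk := QuotientAddGroup.mk_surjective
  have mkeq : ∀ x y : A, mk x = mk y ↔ x - y ∈ formRadical form := by
    intro x y
    rw [hmkdef, QuotientAddGroup.eq]
    have e : -x + y = -(x - y) := by abel
    rw [e, AddSubgroup.neg_mem_iff]
    exact hH _
  have mk0 : ∀ x : A, mk x = 0 ↔ x ∈ formRadical form := by
    intro x
    rw [hmkdef, QuotientAddGroup.eq_zero_iff]
    exact hH _
  have mkadd : ∀ x y : A, mk (x + y) = mk x + mk y := fun x y => rfl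
  have mkzsmul : ∀ (k : ℤ) (x : A), mk (k • x) = k • mk x := fun k x => rfl
  have hsym' : ∀ x y, form' x y = form' y x := by
    intro x y
    obtain ⟨a, rfl⟩ := mksurj x
    obtain ⟨b, rfl⟩ := mksurj y
    rw [hform', hform', hs.symm]
  have hadd' : ∀ x y z, form' (x + y) z = form' x z + form' y z := by
    intro x y z
    obtain ⟨a, rfl⟩ := mksurj x
    obtain ⟨b, rfl⟩ := mksurj y
    obtain ⟨d, rfl⟩ := mksurj z
    rw [← mkadd, hform', hform', hform', hs.add_left]
  have hnd : ∀ x, (∀ y, form' x y = 0) → x = 0 := by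
    intro x hx
    obtain ⟨a, rfl⟩ := mksurj x
    rw [mk0]
    intro b
    rw [← hform' a b]
    exact hx (mk b)
  have hmem : ∀ (β α : A) (k : ℤ), (mk β + k • mk α ∈ mk '' R ↔
      ∃ γ ∈ R, γ - (β + k • α) ∈ formRadical form) := by
    intro β α k
    have e : mk β + k • mk α = mk (β + k • α) := by rw [mkadd, mkzsmul]
    rw [e]
    constructor
    · rintro ⟨γ, hγ, hγe⟩
      exact ⟨γ, hγ, (mkeq _ _).mp hγe⟩
    · rintro ⟨γ, hγ, hγe⟩
      exact ⟨γ, hγ, (mkeq _ _).mpr hγe⟩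
  have hEARS : IsEARS form' (mk '' R) := by
    refine ⟨⟨hsym', hadd'⟩, ?_, ?_, ?_, ?_, ?_, ?_⟩
    · exact ⟨0, h.zero_mem, rfl⟩
    · rw [eq_top_iff]
      rintro x -
      obtain ⟨a, rfl⟩ := mksurj x
      have ha : a ∈ AddSubgroup.closure R := by rw [h.closure_eq_top]; trivial
      refine AddSubgroup.closure_induction ?_ ?_ ?_ ?_ ha
      · intro x hx
        exact AddSubgroup.subset_closure ⟨x, hx, rfl⟩
      · exact zero_mem _
      · intro x y _ _ hx hy
        rw [mkadd]
        exact add_mem hx hy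
      · intro x _ hx
        rw [show mk (-x) = -(mk x) from rfl]
        exact neg_mem hx
    · rintro x ⟨a, haR, rfl⟩
      exact ⟨-a, h.neg_mem a haR, rfl⟩
    · rintro x ⟨a, haR, rfl⟩ hxx y ⟨b, hbR, rfl⟩
      simp only [hform'] at hxx ⊢
      exact h.cartan a haR hxx b hbR
    · rintro x ⟨a, haR, rfl⟩ hxx y ⟨b, hbR, rfl⟩
      rw [hform'] at hxx
      obtain ⟨p, q, h1, h2⟩ := string_quot h haR hxx hbR
      refine ⟨p, q, by simp only [hform']; exact h1, ?_⟩
      intro k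
      rw [hmem b a k]
      exact h2 k
    · rintro x ⟨a, haR, rfl⟩ hxx y ⟨b, hbR, rfl⟩ hxy
      rw [hform'] at hxx hxy
      rcases h.ns_string a haR hxx b hbR hxy with hc | hc
      · exact Or.inl ⟨b - a, hc, rfl⟩
      · exact Or.inr ⟨b + a, hc, rfl⟩
  refine ⟨⟨hEARS, hnd⟩, ?_⟩
  rintro ⟨hre, hconn⟩
  have radmem : ∀ x : A, x ∉ formRadical form → mk x ∉ formRadical form' := by
    intro x hx hx'
    apply hx
    intro b
    rw [← hform' x b]
    exact hx' (mk b)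
  constructor
  · intro heq
    apply hre
    ext x
    simp only [Set.mem_singleton_iff]
    constructor
    · rintro (⟨hxR, hxx⟩ | hx0)
      · exfalso
        have hmk : mk x ∈ reRoots form' (mk '' R) := by
          left
          refine ⟨⟨x, hxR, rfl⟩, ?_⟩
          rw [hform']
          exact hxx
        rw [heq, Set.mem_singleton_iff, mk0] at hmk
        exact hxx (by rw [hs.symm]; exact hmk x)
      · exact hx0
    · intro hx0
      right
      exact hx0
  · intro x hx y hy
    obtain ⟨⟨a, haR, rfl⟩, hxrad⟩ := hx
    obtain ⟨⟨b, hbR, rfl⟩, hyrad⟩ := hy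
    have harad : a ∉ formRadical form := by
      intro hrad
      apply hxrad
      intro z
      obtain ⟨d, rfl⟩ := mksurj z
      rw [hform']
      exact hrad d
    have hbrad : b ∉ formRadical form := by
      intro hrad
      apply hyrad
      intro z
      obtain ⟨d, rfl⟩ := mksurj z
      rw [hform']
      exact hrad d
    obtain ⟨n, ch, hchmem, hch0, hchl, hchne⟩ := hconn a ⟨haR, harad⟩ b ⟨hbR, hbrad⟩
    refine ⟨n, fun i => mk (ch i), ?_, ?_, ?_, ?_⟩
    · intro i
      obtain ⟨hiR, hirad⟩ := hchmem i
      exact ⟨⟨ch i, hiR, rfl⟩, radmem _ hirad⟩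
    · show mk (ch 0) = mk a
      rw [hch0]
    · show mk (ch (Fin.last n)) = mk b
      rw [hchl]
    · intro i
      show form' (mk (ch i.castSucc)) (mk (ch i.succ)) ≠ 0
      rw [hform']
      exact hchne i

end MainAux

theorem stmt12 {F : Type*} [Field F] [CharZero F] {A : Type*} [AddCommGroup A]
    (form : A → A → F) (R : Set A) (h : IsEARS form R)
    (form' : A ⧸ radicalSubgroup form h.toIsSymForm →
             A ⧸ radicalSubgroup form h.toIsSymForm → F)
    (hform' : ∀ a b : A, form' (QuotientAddGroup.mk a) (QuotientAddGroup.mk b) = form a b) :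
    IsLFRSS form'
      ((QuotientAddGroup.mk : A → A ⧸ radicalSubgroup form h.toIsSymForm) '' R) ∧
    (IsIrreducibleRSS form R →
      IsIrreducibleRSS form'
        ((QuotientAddGroup.mk : A → A ⧸ radicalSubgroup form h.toIsSymForm) '' R)) :=
  stmt12_aux form R h (radicalSubgroup form h.toIsSymForm) (fun _ => Iff.rfl) form' hform'
end
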